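/- Let ε₀, μ₀, τ₀, σ₀ > 0 and let (E, H, J, K) solve the abstract weak graphene system on [0, T_fin]. Then for every t ∈ [0, T_fin] one has the identity (1/2)·d/dt[ τ₀ε₀‖E'(t)‖²_X + σ₀‖T E(t)‖²_Z + μ₀‖τ₀^{1/2} H'(t) + τ₀^{−1/2} H(t)‖²_Y − (μ₀/τ₀)‖H(t)‖²_Y ] + ε₀‖E'(t)‖²_X = μ₀‖H'(t)‖²_Y − ⟨H(t), K'(t)⟩_Y − τ₀⟨H'(t), K'(t)⟩_Y. -/

import Mathlib

open scoped RealInnerProductSpace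


lemma deriv_eqOn_zero {W : Type*} [NormedAddCommGroup W] [NormedSpace ℝ W]
    {g : ℝ → W} {a b : ℝ} (hab : a < b) (hg : ContDiff ℝ 1 g)
    (h0 : Set.EqOn g 0 (Set.Icc a b)) : Set.EqOn (deriv g) 0 (Set.Icc a b) := by
  have hints : Set.EqOn (deriv g) 0 (Set.Ioo a b) := by
    intro t ht
    have hmem : Set.Icc a b ∈ nhds t :=
      Filter.mem_of_superset (isOpen_Ioo.mem_nhds ht) Set.Ioo_subset_Icc_self
    have h : g =ᶠ[nhds t] (0 : ℝ → W) := Filter.eventuallyEq_of_mem hmem h0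
    exact h.deriv_eq.trans (deriv_const t 0)
  have := hints.closure (contDiff_one_iff_deriv.mp hg).2 continuous_const
  rw [closure_Ioo hab.ne] at this
  exact this

/-- The identity (2.21) of the stability proof. -/
theorem graphene_identity_p13
    {X Y Z : Type*}
    [NormedAddCommGroup X] [InnerProductSpace ℝ X]
    [NormedAddCommGroup Y] [InnerProductSpace ℝ Y]
    [NormedAddCommGroup Z] [InnerProductSpace ℝ Z]
    (B : X →L[ℝ] Y) (T : X →L[ℝ] Z)
    (ε₀ μ₀ τ₀ σ₀ Tfin : ℝ)
    (hε₀ : 0 < ε₀) (hμ₀ : 0 < μ₀) (hτ₀ : 0 < τ₀) (hσ₀ : 0 < σ₀) (hTfin : 0 < Tfin)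
    (E : ℝ → X) (H : ℝ → Y) (J : ℝ → Z) (K : ℝ → Y)
    (hE : ContDiff ℝ 2 E) (hH : ContDiff ℝ 2 H) (hJ : ContDiff ℝ 2 J)
    (hK : ContDiff ℝ 1 K)
    (heq1 : ∀ t ∈ Set.Icc (0:ℝ) Tfin, ∀ φ : X,
      ε₀ * ⟪deriv E t, φ⟫ = ⟪H t, B φ⟫ - ⟪J t, T φ⟫)
    (heq2 : ∀ t ∈ Set.Icc (0:ℝ) Tfin, μ₀ • deriv H t = -(B (E t)) - K t)
    (heq3 : ∀ t ∈ Set.Icc (0:ℝ) Tfin, τ₀ • deriv J t + J t = σ₀ • T (E t)) :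
    ∀ t ∈ Set.Icc (0:ℝ) Tfin,
      (1/2) * deriv (fun s => τ₀ * ε₀ * ‖deriv E s‖^2 + σ₀ * ‖T (E s)‖^2
          + μ₀ * ‖Real.sqrt τ₀ • deriv H s + (Real.sqrt τ₀)⁻¹ • H s‖^2
          - (μ₀/τ₀) * ‖H s‖^2) t
        + ε₀ * ‖deriv E t‖^2
      = μ₀ * ‖deriv H t‖^2 - ⟪H t, deriv K t⟫ - τ₀ * ⟪deriv H t, deriv K t⟫ := by
  intro t ht
  -- regularity
  have h2eq : (2 : WithTop ℕ∞) = 1 + 1 := by norm_num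
  have hE1 : ContDiff ℝ 1 (deriv E) := by
    rw [h2eq] at hE; exact (contDiff_succ_iff_deriv.mp hE).2.2
  have hH1 : ContDiff ℝ 1 (deriv H) := by
    rw [h2eq] at hH; exact (contDiff_succ_iff_deriv.mp hH).2.2
  have hJ1 : ContDiff ℝ 1 (deriv J) := by
    rw [h2eq] at hJ; exact (contDiff_succ_iff_deriv.mp hJ).2.2
  have hEd : Differentiable ℝ E := hE.differentiable two_ne_zero
  have hHd : Differentiable ℝ H := hH.differentiable two_ne_zero
  have hJd : Differentiable ℝ J := hJ.differentiable two_ne_zero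
  have hKd : Differentiable ℝ K := hK.differentiable one_ne_zero
  have hE'd : Differentiable ℝ (deriv E) := hE1.differentiable one_ne_zero
  have hH'd : Differentiable ℝ (deriv H) := hH1.differentiable one_ne_zero
  have hJ'd : Differentiable ℝ (deriv J) := hJ1.differentiable one_ne_zero
  have hHdt : ∀ s, HasDerivAt H (deriv H s) s := fun s => (hHd s).hasDerivAt
  have hE'dt : ∀ s, HasDerivAt (deriv E) (deriv (deriv E) s) s := fun s => (hE'd s).hasDerivAt
  have hH'dt : ∀ s, HasDerivAt (deriv H) (deriv (deriv H) s) s := fun s => (hH'd s).hasDerivAt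
  have hJ'dt : ∀ s, HasDerivAt (deriv J) (deriv (deriv J) s) s := fun s => (hJ'd s).hasDerivAt
  have hKdt : ∀ s, HasDerivAt K (deriv K s) s := fun s => (hKd s).hasDerivAt
  have hTEt : ∀ s, HasDerivAt (fun u => T (E u)) (T (deriv E s)) s := fun s =>
    T.hasFDerivAt.comp_hasDerivAt s (hEd s).hasDerivAt
  have hBEt : ∀ s, HasDerivAt (fun u => B (E u)) (B (deriv E s)) s := fun s =>
    B.hasFDerivAt.comp_hasDerivAt s (hEd s).hasDerivAt
  -- rewrite the energy functional
  have hsq : Real.sqrt τ₀ * Real.sqrt τ₀ = τ₀ := Real.mul_self_sqrt hτ₀.le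
  have hsne : Real.sqrt τ₀ ≠ 0 := by positivity
  have hFG : (fun s => τ₀ * ε₀ * ‖deriv E s‖^2 + σ₀ * ‖T (E s)‖^2
          + μ₀ * ‖Real.sqrt τ₀ • deriv H s + (Real.sqrt τ₀)⁻¹ • H s‖^2
          - (μ₀/τ₀) * ‖H s‖^2)
      = (fun s => τ₀ * ε₀ * ⟪deriv E s, deriv E s⟫ + σ₀ * ⟪T (E s), T (E s)⟫
          + μ₀ * τ₀ * ⟪deriv H s, deriv H s⟫ + 2 * μ₀ * ⟪deriv H s, H s⟫) := by
    funext s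
    simp only [← real_inner_self_eq_norm_sq, inner_add_left, inner_add_right,
      real_inner_smul_left, real_inner_smul_right, real_inner_comm (H s) (deriv H s)]
    field_simp
    linear_combination (τ₀ * μ₀ * ⟪deriv H s, deriv H s⟫ * Real.sqrt τ₀ ^ 2 - μ₀ * ⟪H s, H s⟫) * hsq
  -- derivative of the energy
  have i1 : HasDerivAt (fun s => τ₀ * ε₀ * ⟪deriv E s, deriv E s⟫)
      (τ₀ * ε₀ * (2 * ⟪deriv (deriv E) t, deriv E t⟫)) t := by
    have := (HasDerivAt.inner ℝ (hE'dt t) (hE'dt t)).const_mul (τ₀ * ε₀)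
    refine this.congr_deriv ?_
    rw [real_inner_comm (deriv E t) (deriv (deriv E) t)]; ring
  have i2 : HasDerivAt (fun s => σ₀ * ⟪T (E s), T (E s)⟫)
      (σ₀ * (2 * ⟪T (deriv E t), T (E t)⟫)) t := by
    have := (HasDerivAt.inner ℝ (hTEt t) (hTEt t)).const_mul σ₀
    refine this.congr_deriv ?_
    rw [real_inner_comm (T (E t)) (T (deriv E t))]; ring
  have i3 : HasDerivAt (fun s => μ₀ * τ₀ * ⟪deriv H s, deriv H s⟫)
      (μ₀ * τ₀ * (2 * ⟪deriv (deriv H) t, deriv H t⟫)) t := by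
    have := (HasDerivAt.inner ℝ (hH'dt t) (hH'dt t)).const_mul (μ₀ * τ₀)
    refine this.congr_deriv ?_
    rw [real_inner_comm (deriv H t) (deriv (deriv H) t)]; ring
  have i4 : HasDerivAt (fun s => 2 * μ₀ * ⟪deriv H s, H s⟫)
      (2 * μ₀ * (⟪deriv H t, deriv H t⟫ + ⟪deriv (deriv H) t, H t⟫)) t :=
    (HasDerivAt.inner ℝ (hH'dt t) (hHdt t)).const_mul (2 * μ₀)
  have hG : HasDerivAt (fun s => τ₀ * ε₀ * ⟪deriv E s, deriv E s⟫ + σ₀ * ⟪T (E s), T (E s)⟫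
          + μ₀ * τ₀ * ⟪deriv H s, deriv H s⟫ + 2 * μ₀ * ⟪deriv H s, H s⟫)
      (τ₀ * ε₀ * (2 * ⟪deriv (deriv E) t, deriv E t⟫)
        + σ₀ * (2 * ⟪T (deriv E t), T (E t)⟫)
        + μ₀ * τ₀ * (2 * ⟪deriv (deriv H) t, deriv H t⟫)
        + 2 * μ₀ * (⟪deriv H t, deriv H t⟫ + ⟪deriv (deriv H) t, H t⟫)) t :=
    ((i1.add i2).add i3).add i4
  -- differentiated equation (ii)
  have h2' : μ₀ • deriv (deriv H) t + (B (deriv E t) + deriv K t) = 0 := by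
    have hg2C : ContDiff ℝ 1 (fun s => μ₀ • deriv H s + (B (E s) + K s)) :=
      (hH1.const_smul μ₀).add ((B.contDiff.comp (hE.of_le (by norm_num))).add hK)
    have hg2z : Set.EqOn (fun s => μ₀ • deriv H s + (B (E s) + K s)) 0 (Set.Icc 0 Tfin) := by
      intro s hs
      have := heq2 s hs
      simp only [Pi.zero_apply]
      rw [this]; abel
    have hg2d : HasDerivAt (fun s => μ₀ • deriv H s + (B (E s) + K s))
        (μ₀ • deriv (deriv H) t + (B (deriv E t) + deriv K t)) t :=
      ((hH'dt t).const_smul μ₀).add ((hBEt t).add (hKdt t))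
    have := deriv_eqOn_zero hTfin hg2C hg2z ht
    rw [← hg2d.deriv]
    exact this
  have s2a : μ₀ * ⟪deriv (deriv H) t, H t⟫ + (⟪B (deriv E t), H t⟫ + ⟪deriv K t, H t⟫) = 0 := by
    have := congrArg (fun v => ⟪v, H t⟫) h2'
    simpa [inner_add_left, real_inner_smul_left] using this
  have s2b : μ₀ * ⟪deriv (deriv H) t, deriv H t⟫
      + (⟪B (deriv E t), deriv H t⟫ + ⟪deriv K t, deriv H t⟫) = 0 := by
    have := congrArg (fun v => ⟪v, deriv H t⟫) h2'
    simpa [inner_add_left, real_inner_smul_left] using this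
  -- differentiated equation (i) with φ = deriv E t
  set φ := deriv E t with hφ
  have h1' : ε₀ * ⟪deriv (deriv E) t, φ⟫ = ⟪deriv H t, B φ⟫ - ⟪deriv J t, T φ⟫ := by
    have hg1C : ContDiff ℝ 1 (fun s => ε₀ * ⟪deriv E s, φ⟫ - (⟪H s, B φ⟫ - ⟪J s, T φ⟫)) := by
      exact (contDiff_const.mul (ContDiff.inner ℝ hE1 contDiff_const)).sub
        ((ContDiff.inner ℝ (hH.of_le (by norm_num)) contDiff_const).sub
          (ContDiff.inner ℝ (hJ.of_le (by norm_num)) contDiff_const))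
    have hg1z : Set.EqOn (fun s => ε₀ * ⟪deriv E s, φ⟫ - (⟪H s, B φ⟫ - ⟪J s, T φ⟫)) 0
        (Set.Icc 0 Tfin) := by
      intro s hs
      simp only [Pi.zero_apply]
      rw [heq1 s hs φ]; ring
    have hg1d : HasDerivAt (fun s => ε₀ * ⟪deriv E s, φ⟫ - (⟪H s, B φ⟫ - ⟪J s, T φ⟫))
        (ε₀ * ⟪deriv (deriv E) t, φ⟫ - (⟪deriv H t, B φ⟫ - ⟪deriv J t, T φ⟫)) t := by
      have a1 : HasDerivAt (fun s => ⟪deriv E s, φ⟫) ⟪deriv (deriv E) t, φ⟫ t := by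
        simpa using HasDerivAt.inner ℝ (hE'dt t) (hasDerivAt_const t φ)
      have a2 : HasDerivAt (fun s => ⟪H s, B φ⟫) ⟪deriv H t, B φ⟫ t := by
        simpa using HasDerivAt.inner ℝ (hHdt t) (hasDerivAt_const t (B φ))
      have a3 : HasDerivAt (fun s => ⟪J s, T φ⟫) ⟪deriv J t, T φ⟫ t := by
        simpa using HasDerivAt.inner ℝ ((hJd t).hasDerivAt) (hasDerivAt_const t (T φ))
      exact (a1.const_mul ε₀).sub (a2.sub a3)
    have h0 := deriv_eqOn_zero hTfin hg1C hg1z ht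
    rw [hg1d.deriv] at h0
    have h0' : ε₀ * ⟪deriv (deriv E) t, φ⟫ - (⟪deriv H t, B φ⟫ - ⟪deriv J t, T φ⟫) = 0 := h0
    linarith
  have h1 : ε₀ * ⟪φ, φ⟫ = ⟪H t, B φ⟫ - ⟪J t, T φ⟫ := heq1 t ht φ
  have s3 : τ₀ * ⟪deriv J t, T φ⟫ + ⟪J t, T φ⟫ = σ₀ * ⟪T (E t), T φ⟫ := by
    have := congrArg (fun v => ⟪v, T φ⟫) (heq3 t ht)
    simpa [inner_add_left, real_inner_smul_left] using this
  -- assemble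
  rw [hFG, hG.deriv, ← real_inner_self_eq_norm_sq, ← real_inner_self_eq_norm_sq]
  have c2 : ⟪T φ, T (E t)⟫ = ⟪T (E t), T φ⟫ := real_inner_comm _ _
  have c4 : ⟪H t, B φ⟫ = ⟪B φ, H t⟫ := real_inner_comm _ _
  have c5 : ⟪deriv H t, B φ⟫ = ⟪B φ, deriv H t⟫ := real_inner_comm _ _
  have c6 : ⟪H t, deriv K t⟫ = ⟪deriv K t, H t⟫ := real_inner_comm _ _
  have c7 : ⟪deriv H t, deriv K t⟫ = ⟪deriv K t, deriv H t⟫ := real_inner_comm _ _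
  linear_combination τ₀ * h1' + h1 + τ₀ * s2b + s2a - s3 + σ₀ * c2 + τ₀ * c5 + c4 + τ₀ * c7 + c6
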